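/- Let 𝔫 be a finite-dimensional real nilpotent Lie algebra and L : 𝔫 → 𝔫 an expanding Lie algebra automorphism admitting a real eigenbasis Σ, with simple sorted spectrum. Fix a norm ‖·‖ on 𝔫 and let φ denote the associated Guivarc'h length with respect to the L-grading. Let v ∈ Σ be the eigenvector whose eigenvalue λ₁ has smallest modulus, and set σ = min over w ∈ Σ∖{v} of the escape speeds σ_w; then σ > |λ₁|. Moreover, for any η with |λ₁| < η < σ and any x ∈ 𝔫: if there exist constants C, D such that φ(Lⁿ(x)) ≤ C·ηⁿ + D for all n ≥ 0, then x lies in the one-dimensional subspace spanned by v. -/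

import Mathlib

/-!
Statement 0: for a Lie algebra automorphism `L` of a finite-dimensional real nilpotent Lie
algebra `𝔫` admitting a real eigenbasis, the `L`-grading satisfies
`𝔫_(i) = [𝔫_(1), 𝔫_(i-1)]` for all `i ≥ 2`.
-/

/-- The span of all brackets `⁅x, y⁆` with `x ∈ A`, `y ∈ B`. -/
def bracketSpan {𝔫 : Type*} [LieRing 𝔫] [LieAlgebra ℝ 𝔫] (A B : Submodule ℝ 𝔫) :
    Submodule ℝ 𝔫 :=
  Submodule.span ℝ {z : 𝔫 | ∃ x ∈ A, ∃ y ∈ B, z = ⁅x, y⁆}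

/-- The lower central series of a subalgebra `A` (as a submodule of `𝔫`), 0-indexed:
`lcsOf A i` is the paper's `A^{i+1}`, so `lcsOf A 0 = A = A¹` and
`A^{i+1} = ⁅A, A^i⁆`. -/
def lcsOf {𝔫 : Type*} [LieRing 𝔫] [LieAlgebra ℝ 𝔫] (A : Submodule ℝ 𝔫) :
    ℕ → Submodule ℝ 𝔫
  | 0 => A
  | (i + 1) => bracketSpan A (lcsOf A i)

/-- `v` is an eigenvector of `L` (with some real eigenvalue). -/
def IsEigvec {𝔫 : Type*} [LieRing 𝔫] [LieAlgebra ℝ 𝔫] (L : 𝔫 ≃ₗ⁅ℝ⁆ 𝔫) (v : 𝔫) : Prop :=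
  v ≠ 0 ∧ ∃ c : ℝ, L v = c • v

/-- The `L`-grading of the subalgebra `A ⊆ 𝔫`: for `i ≥ 1` the `i`-th piece is the span of the
eigenvectors of `L` lying in `A^i` but not in `A^{i+1}`; the (unused) `0`-th piece is `⊥`.
The paper's `𝔫_(i)` is `grading L ⊤ i`. -/
def grading {𝔫 : Type*} [LieRing 𝔫] [LieAlgebra ℝ 𝔫] (L : 𝔫 ≃ₗ⁅ℝ⁆ 𝔫) (A : Submodule ℝ 𝔫) :
    ℕ → Submodule ℝ 𝔫
  | 0 => ⊥
  | (i + 1) => Submodule.span ℝ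
      {v : 𝔫 | IsEigvec L v ∧ v ∈ lcsOf A i ∧ v ∉ lcsOf A (i + 1)}

/-- `L` admits a basis of real eigenvectors. -/
def HasRealEigenbasis {𝔫 : Type*} [LieRing 𝔫] [LieAlgebra ℝ 𝔫] (L : 𝔫 ≃ₗ⁅ℝ⁆ 𝔫) : Prop :=
  ∃ (n : ℕ) (b : Module.Basis (Fin n) ℝ 𝔫) (c : Fin n → ℝ), ∀ i, L (b i) = c i • b i


/-- `L` has sorted unstable spectrum: if `k < j` and `v ∈ 𝔫_(k)`, `w ∈ 𝔫_(j)` are unstable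
eigenvectors with eigenvalues `cv`, `cw`, then `|cv| < |cw|`. -/
def SortedUnstableSpectrum {𝔫 : Type*} [LieRing 𝔫] [LieAlgebra ℝ 𝔫] (L : 𝔫 ≃ₗ⁅ℝ⁆ 𝔫) : Prop :=
  ∀ (k j : ℕ), k < j → ∀ (v w : 𝔫) (cv cw : ℝ),
    v ≠ 0 → L v = cv • v → 1 < |cv| → v ∈ grading L ⊤ k →
    w ≠ 0 → L w = cw • w → 1 < |cw| → w ∈ grading L ⊤ j →
    |cv| < |cw|

/-- The Guivarc'h length `φ(x) = max_{1 ≤ k ≤ d} ‖x_k‖^{1/k}` associated to a norm `Nm` and a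
family `P` of projections onto the graded pieces (`x_k = P k x`), where `d` bounds the
nilpotency degree. -/
noncomputable def guiLength {𝔫 : Type*} [LieRing 𝔫] [LieAlgebra ℝ 𝔫]
    (Nm : 𝔫 → ℝ) (P : ℕ → 𝔫 →ₗ[ℝ] 𝔫) (d : ℕ) (hd : (Finset.Icc 1 d).Nonempty) (x : 𝔫) : ℝ :=
  (Finset.Icc 1 d).sup' hd fun k => Nm (P k x) ^ ((1 : ℝ) / k)
section Aux

variable {𝔫 : Type*} [LieRing 𝔫] [LieAlgebra ℝ 𝔫]
variable (L : 𝔫 ≃ₗ⁅ℝ⁆ 𝔫) {n : ℕ} (b : Module.Basis (Fin n) ℝ 𝔫) (c : Fin n → ℝ)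

lemma aux_reprL (hb : ∀ i, L (b i) = c i • b i) (y : 𝔫) (i : Fin n) :
    b.repr (L y) i = c i * b.repr y i := by
  have hy : L y = ∑ j, (c j * b.repr y j) • b j := by
    conv_lhs => rw [← b.sum_repr y]
    rw [← LieEquiv.coe_toLinearEquiv, map_sum]
    refine Finset.sum_congr rfl fun j _ => ?_
    rw [map_smul, LieEquiv.coe_toLinearEquiv, hb j, smul_smul, mul_comm]
  rw [hy, b.repr_sum_self]

lemma aux_eig (hb : ∀ i, L (b i) = c i • b i)
    (hsimple : Function.Injective fun i => |c i|)
    (u : 𝔫) (cu : ℝ) (hu : u ≠ 0) (hLu : L u = cu • u) :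
    ∃ (l : Fin n) (t : ℝ), t ≠ 0 ∧ u = t • b l ∧ c l = cu := by
  have hsup : ∀ l, b.repr u l ≠ 0 → c l = cu := by
    intro l hl
    have h1 := aux_reprL L b c hb u l
    rw [hLu] at h1
    rw [map_smul, Finsupp.smul_apply, smul_eq_mul] at h1
    exact mul_right_cancel₀ hl h1.symm
  have hne : b.repr u ≠ 0 := fun h => hu (by simpa using congrArg b.repr.symm h)
  obtain ⟨l, hl⟩ : ∃ l, b.repr u l ≠ 0 := by
    by_contra h
    push_neg at h
    exact hne (Finsupp.ext h)
  have huniq : ∀ l', b.repr u l' ≠ 0 → l' = l := by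
    intro l' hl'
    exact hsimple (show |c l'| = |c l| by rw [hsup l' hl', hsup l hl])
  refine ⟨l, b.repr u l, hl, ?_, hsup l hl⟩
  conv_lhs => rw [← b.sum_repr u]
  rw [Finset.sum_eq_single l]
  · intro j _ hj
    rw [show b.repr u j = 0 from by_contra fun h => hj (huniq j h), zero_smul]
  · intro h; exact absurd (Finset.mem_univ l) h

end Aux
section Aux2

variable {𝔫 : Type*} [LieRing 𝔫] [LieAlgebra ℝ 𝔫]

lemma aux_lie_mem_span (s t : Set 𝔫) (Q : Submodule ℝ 𝔫)
    (h : ∀ x ∈ s, ∀ y ∈ t, ⁅x, y⁆ ∈ Q) :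
    ∀ x ∈ Submodule.span ℝ s, ∀ y ∈ Submodule.span ℝ t, ⁅x, y⁆ ∈ Q := by
  intro x hx
  induction hx using Submodule.span_induction with
  | mem x hxs =>
    intro y hy
    induction hy using Submodule.span_induction with
    | mem y hyt => exact h _ hxs _ hyt
    | zero => rw [lie_zero]; exact Q.zero_mem
    | add y z _ _ hy hz => rw [lie_add]; exact Q.add_mem hy hz
    | smul a y _ hy => rw [lie_smul]; exact Q.smul_mem a hy
  | zero => intro y hy; rw [zero_lie]; exact Q.zero_mem
  | add x z _ _ hx hz => intro y hy; rw [add_lie]; exact Q.add_mem (hx y hy) (hz y hy)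
  | smul a x _ hx => intro y hy; rw [smul_lie]; exact Q.smul_mem a (hx y hy)

lemma aux_bracketSpan_le {s t : Set 𝔫} {A B Q : Submodule ℝ 𝔫}
    (hA : A ≤ Submodule.span ℝ s) (hB : B ≤ Submodule.span ℝ t)
    (h : ∀ x ∈ s, ∀ y ∈ t, ⁅x, y⁆ ∈ Q) : bracketSpan A B ≤ Q := by
  rw [bracketSpan]
  apply Submodule.span_le.2
  rintro z ⟨x, hx, y, hy, rfl⟩
  exact aux_lie_mem_span s t Q h x (hA hx) y (hB hy)

lemma aux_bracketSpan_mono (A : Submodule ℝ 𝔫) {B B' : Submodule ℝ 𝔫} (h : B ≤ B') :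
    bracketSpan A B ≤ bracketSpan A B' :=
  Submodule.span_mono (fun z => fun ⟨x, hx, y, hy, e⟩ => ⟨x, hx, y, h hy, e⟩)

lemma aux_lcs_succ_le (m : ℕ) : lcsOf (⊤ : Submodule ℝ 𝔫) (m + 1) ≤ lcsOf ⊤ m := by
  induction m with
  | zero => exact le_top
  | succ m ih => exact aux_bracketSpan_mono ⊤ ih

lemma aux_lcs_le {k k' : ℕ} (h : k ≤ k') : lcsOf (⊤ : Submodule ℝ 𝔫) k' ≤ lcsOf ⊤ k := by
  induction k' with
  | zero => rw [Nat.le_zero.1 h]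
  | succ m ih =>
    rcases Nat.lt_or_ge k (m+1) with h1 | h1
    · exact le_trans (aux_lcs_succ_le m) (ih (Nat.lt_succ_iff.1 h1))
    · rw [le_antisymm h h1]

end Aux2
section Aux3

variable {𝔫 : Type*} [LieRing 𝔫] [LieAlgebra ℝ 𝔫]
variable (L : 𝔫 ≃ₗ⁅ℝ⁆ 𝔫) {n : ℕ} (b : Module.Basis (Fin n) ℝ 𝔫) (c : Fin n → ℝ)

lemma aux_grading_le (hb : ∀ i, L (b i) = c i • b i)
    (hsimple : Function.Injective fun i => |c i|) (k : ℕ) :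
    grading L ⊤ (k + 1) ≤ Submodule.span ℝ
      (⇑b '' {l | b l ∈ lcsOf (⊤ : Submodule ℝ 𝔫) k ∧ b l ∉ lcsOf ⊤ (k + 1)}) := by
  apply Submodule.span_le.2
  rintro v ⟨⟨hv0, cv, hLv⟩, hvk, hvk1⟩
  obtain ⟨l, t, ht, rfl, hcl⟩ := aux_eig L b c hb hsimple v cv hv0 hLv
  have hbl : b l = t⁻¹ • (t • b l) := by rw [smul_smul, inv_mul_cancel₀ ht, one_smul]
  apply Submodule.smul_mem
  apply Submodule.subset_span
  refine ⟨l, ⟨?_, ?_⟩, rfl⟩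
  · rw [hbl]; exact Submodule.smul_mem _ _ hvk
  · intro hmem
    exact hvk1 (Submodule.smul_mem _ t hmem)

lemma aux_lcs_le_span (hb : ∀ i, L (b i) = c i • b i)
    (hexp : ∀ (u : 𝔫) (cu : ℝ), u ≠ 0 → L u = cu • u → 1 < |cu|)
    (hsimple : Function.Injective fun i => |c i|)
    (i₀ : Fin n) (hmin : ∀ i, |c i₀| ≤ |c i|) :
    ∀ m : ℕ, lcsOf (⊤ : Submodule ℝ 𝔫) (m + 1) ≤
      Submodule.span ℝ (⇑b '' {l | |c i₀| ^ (m + 2) < |c l|}) := by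
  have hlam1 : 1 < |c i₀| := hexp (b i₀) (c i₀) (b.ne_zero i₀) (hb i₀)
  have hlampos : (0 : ℝ) < |c i₀| := lt_trans one_pos hlam1
  -- generic eigen-structure of brackets
  have hlie : ∀ i l : Fin n, ⁅b i, b l⁆ ≠ 0 →
      ∃ (l' : Fin n) (t : ℝ), t ≠ 0 ∧ ⁅b i, b l⁆ = t • b l' ∧ c l' = c i * c l := by
    intro i l h0
    have hL : L ⁅b i, b l⁆ = (c i * c l) • ⁅b i, b l⁆ := by
      rw [← LieEquiv.coe_toLieHom, LieHom.map_lie, LieEquiv.coe_toLieHom,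
        hb i, hb l, lie_smul, smul_lie, smul_smul, mul_comm (c l) (c i)]
    exact aux_eig L b c hb hsimple _ _ h0 hL
  have key : ∀ (ρ : ℝ), 0 ≤ ρ → ∀ i l : Fin n, ρ < |c l| →
      ⁅b i, b l⁆ ∈ Submodule.span ℝ (⇑b '' {l' | |c i₀| * ρ < |c l'|}) := by
    intro ρ hρ i l hl
    by_cases h0 : ⁅b i, b l⁆ = (0 : 𝔫)
    · rw [h0]; exact Submodule.zero_mem _
    · obtain ⟨l', t, ht, heq, hcl'⟩ := hlie i l h0
      rw [heq]
      apply Submodule.smul_mem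
      apply Submodule.subset_span
      refine ⟨l', ?_, rfl⟩
      show |c i₀| * ρ < |c l'|
      rw [hcl', abs_mul]
      exact mul_lt_mul' (hmin i) hl hρ (lt_of_lt_of_le hlampos (hmin i))
  have base : ∀ i k : Fin n, ⁅b i, b k⁆ ∈
      Submodule.span ℝ (⇑b '' {l | |c i₀| ^ 2 < |c l|}) := by
    intro i k
    by_cases h0 : ⁅b i, b k⁆ = (0 : 𝔫)
    · rw [h0]; exact Submodule.zero_mem _
    · obtain ⟨l', t, ht, heq, hcl'⟩ := hlie i k h0
      rw [heq]
      apply Submodule.smul_mem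
      apply Submodule.subset_span
      refine ⟨l', ?_, rfl⟩
      show |c i₀| ^ 2 < |c l'|
      have hik : i ≠ k := fun h => h0 (by rw [h, lie_self])
      have hstrict : ∀ j : Fin n, j ≠ i₀ → |c i₀| < |c j| := fun j hj =>
        lt_of_le_of_ne (hmin j) (fun h => hj (hsimple h.symm))
      rw [hcl', abs_mul, sq]
      rcases eq_or_ne i i₀ with hi | hi
      · have hk : k ≠ i₀ := fun h => hik (by rw [hi, h])
        rw [hi]
        exact mul_lt_mul_of_pos_left (hstrict k hk) hlampos
      · exact mul_lt_mul (hstrict i hi) (hmin k) hlampos (abs_nonneg _)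
  intro m
  induction m with
  | zero =>
    show bracketSpan ⊤ (lcsOf ⊤ 0) ≤ _
    refine aux_bracketSpan_le (s := Set.range ⇑b) (t := Set.range ⇑b)
      (le_of_eq b.span_eq.symm) (le_of_eq b.span_eq.symm) ?_
    rintro x ⟨i, rfl⟩ y ⟨k, rfl⟩
    exact base i k
  | succ m ih =>
    show bracketSpan ⊤ (lcsOf ⊤ (m + 1)) ≤ _
    refine aux_bracketSpan_le (s := Set.range ⇑b)
      (t := ⇑b '' {l | |c i₀| ^ (m + 2) < |c l|}) (le_of_eq b.span_eq.symm) ih ?_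
    rintro x ⟨i, rfl⟩ y ⟨l, hl, rfl⟩
    have hk := key (|c i₀| ^ (m + 2)) (pow_nonneg (abs_nonneg _) _) i l hl
    rwa [← pow_succ'] at hk

end Aux3

/-- let `L` be an expanding automorphism with simple sorted spectrum of a
finite-dimensional real nilpotent Lie algebra, with real eigenbasis `b` and eigenvalues `c`.
Fix a norm `Nm` on `𝔫` and let `φ = guiLength Nm P d hd` be the associated Guivarc'h length,
where `P k` is the projection onto the graded piece `𝔫_(k)` coming from the direct sum
decomposition `𝔫 = ⨁_{1 ≤ k ≤ d} 𝔫_(k)` and `deg i` is the grading degree of `b i`.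
Let `v = b i₀` be the eigenvector of smallest eigenvalue modulus `|λ₁| = |c i₀|`, and let
`σ = min_{w ∈ Σ \ {v}} σ_w` be the second-slowest escape speed. Then `σ > |λ₁|` (first
conjunct), and for any `η` with `|λ₁| < η < σ` and any `x`: if `φ(Lⁿ x) ≤ C·ηⁿ + D` for all
`n ≥ 0`, then `x` lies in the one-dimensional subspace spanned by `v`. -/
theorem guivarch_growth_characterizes_slow_direction
    {𝔫 : Type*} [LieRing 𝔫] [LieAlgebra ℝ 𝔫] [FiniteDimensional ℝ 𝔫]
    [LieRing.IsNilpotent 𝔫]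
    (L : 𝔫 ≃ₗ⁅ℝ⁆ 𝔫)
    (n : ℕ) (b : Module.Basis (Fin n) ℝ 𝔫) (c : Fin n → ℝ)
    (hb : ∀ i, L (b i) = c i • b i)
    (hexp : ∀ (u : 𝔫) (cu : ℝ), u ≠ 0 → L u = cu • u → 1 < |cu|)
    (hsimple : Function.Injective fun i => |c i|)
    (hsorted : SortedUnstableSpectrum L)
    -- a norm on 𝔫
    (Nm : 𝔫 → ℝ)
    (hNm_nonneg : ∀ x, 0 ≤ Nm x) (hNm_eq_zero : ∀ x, Nm x = 0 ↔ x = 0)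
    (hNm_smul : ∀ (a : ℝ) (x : 𝔫), Nm (a • x) = |a| * Nm x)
    (hNm_add : ∀ x y : 𝔫, Nm (x + y) ≤ Nm x + Nm y)
    -- the decomposition 𝔫 = ⨁_{1 ≤ k ≤ d} 𝔫_(k) with projections P k
    (d : ℕ) (hd : (Finset.Icc 1 d).Nonempty)
    (P : ℕ → 𝔫 →ₗ[ℝ] 𝔫)
    (hP_mem : ∀ (k : ℕ) (x : 𝔫), P k x ∈ grading L ⊤ k)
    (hP_sum : ∀ x : 𝔫, x = ∑ k ∈ Finset.Icc 1 d, P k x)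
    (hP_proj : ∀ (k : ℕ), k ∈ Finset.Icc 1 d → ∀ x ∈ grading L ⊤ k, P k x = x)
    -- the eigenbasis vectors and their grading degrees
    (deg : Fin n → ℕ) (hdeg₁ : ∀ i, 1 ≤ deg i) (hdeg : ∀ i, b i ∈ grading L ⊤ (deg i))
    -- the slowest eigenvector v = b i₀
    (i₀ : Fin n) (hmin : ∀ i, |c i₀| ≤ |c i|) :
    (∀ i : Fin n, i ≠ i₀ → |c i₀| < |c i| ^ ((1 : ℝ) / (deg i))) ∧
    (∀ η : ℝ, |c i₀| < η → (∀ i : Fin n, i ≠ i₀ → η < |c i| ^ ((1 : ℝ) / (deg i))) →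
      ∀ (x : 𝔫) (C D : ℝ),
        (∀ m : ℕ, guiLength Nm P d hd ((⇑L)^[m] x) ≤ C * η ^ m + D) →
        x ∈ Submodule.span ℝ {b i₀}) := by
  classical
  have hlam1 : 1 < |c i₀| := hexp (b i₀) (c i₀) (b.ne_zero i₀) (hb i₀)
  have hlampos : (0 : ℝ) < |c i₀| := lt_trans one_pos hlam1
  have hpow_lt : ∀ i : Fin n, i ≠ i₀ → |c i₀| ^ (deg i) < |c i| := by
    intro i hi
    have hstrict : |c i₀| < |c i| :=
      lt_of_le_of_ne (hmin i) (fun h => hi (hsimple h).symm)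
    rcases Nat.lt_or_ge (deg i) 2 with h2 | h2
    · have h1 : deg i = 1 := le_antisymm (by omega) (hdeg₁ i)
      rw [h1, pow_one]; exact hstrict
    · obtain ⟨e, he⟩ : ∃ e, deg i = e + 2 := ⟨deg i - 2, by omega⟩
      have h1 : b i ∈ lcsOf (⊤ : Submodule ℝ 𝔫) (e + 1) := by
        have hle : grading L ⊤ (e + 2) ≤ lcsOf (⊤ : Submodule ℝ 𝔫) (e + 1) := by
          apply Submodule.span_le.2
          rintro v ⟨_, hv, _⟩
          exact hv
        exact hle (by rw [← he]; exact hdeg i)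
      have h2' := (aux_lcs_le_span L b c hb hexp hsimple i₀ hmin e) h1
      have h3 := (Module.Basis.mem_span_image b).1 h2'
      have h4 : i ∈ (b.repr (b i)).support := by
        rw [b.repr_self]; simp
      have h5 := h3 h4
      rw [he]; exact h5
  constructor
  · intro i hi
    have hkey := hpow_lt i hi
    have hj0 : (0 : ℝ) < ((deg i : ℕ) : ℝ) := by
      have := hdeg₁ i; exact_mod_cast Nat.pos_of_ne_zero (by omega)
    have heq : |c i₀| = (|c i₀| ^ (deg i)) ^ ((1 : ℝ) / (deg i)) := by
      rw [← Real.rpow_natCast (|c i₀|) (deg i), ← Real.rpow_mul (abs_nonneg _),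
        mul_one_div_cancel (ne_of_gt hj0), Real.rpow_one]
    rw [heq]
    exact Real.rpow_lt_rpow (pow_nonneg (abs_nonneg _) _) hkey (by positivity)
  · intro η hη1 hη2 x C D hφ
    by_contra hxs
    obtain ⟨i1, hne, ha⟩ : ∃ i, i ≠ i₀ ∧ b.repr x i ≠ 0 := by
      by_contra h
      push_neg at h
      apply hxs
      have hx : x = b.repr x i₀ • b i₀ := by
        conv_lhs => rw [← b.sum_repr x]
        rw [Finset.sum_eq_single i₀]
        · intro j _ hj; rw [h j hj, zero_smul]
        · intro hh; exact absurd (Finset.mem_univ i₀) hh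
      rw [hx]
      exact Submodule.smul_mem _ _ (Submodule.mem_span_singleton_self _)
    set j := deg i1 with hjdef
    have hηgt1 : 1 < η := lt_trans hlam1 hη1
    have hηpos : 0 < η := lt_trans one_pos hηgt1
    have hj0 : (0 : ℝ) < ((j : ℕ) : ℝ) := by
      have := hdeg₁ i1; exact_mod_cast Nat.pos_of_ne_zero (by omega)
    have hμ : η ^ j < |c i1| := by
      have h1 := hη2 i1 hne
      have h2 : η ^ ((j : ℕ) : ℝ) < (|c i1| ^ ((1 : ℝ) / j)) ^ ((j : ℕ) : ℝ) :=
        Real.rpow_lt_rpow (le_of_lt hηpos) h1 hj0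
      rw [← Real.rpow_mul (abs_nonneg _), one_div_mul_cancel (ne_of_gt hj0),
        Real.rpow_one, Real.rpow_natCast] at h2
      exact h2
    have hrepr : ∀ m, b.repr ((⇑L)^[m] x) i1 = c i1 ^ m * b.repr x i1 := by
      intro m
      induction m with
      | zero => simp
      | succ m ih =>
        rw [Function.iterate_succ_apply', aux_reprL L b c hb, ih, pow_succ]
        ring
    obtain ⟨e, he⟩ : ∃ e, deg i1 = e + 1 := ⟨deg i1 - 1, by have := hdeg₁ i1; omega⟩
    have hi1S : b i1 ∈ lcsOf (⊤ : Submodule ℝ 𝔫) e ∧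
        b i1 ∉ lcsOf (⊤ : Submodule ℝ 𝔫) (e + 1) := by
      have h1 := aux_grading_le L b c hb hsimple e (by rw [← he]; exact hdeg i1)
      have h2 := (Module.Basis.mem_span_image b).1 h1
      have h4 : i1 ∈ (b.repr (b i1)).support := by rw [b.repr_self]; simp
      exact h2 h4
    have hvanish : ∀ k : ℕ, k ≠ j → ∀ y : 𝔫, b.repr (P k y) i1 = 0 := by
      intro k hk y
      cases k with
      | zero =>
        have h0 : P 0 y ∈ (⊥ : Submodule ℝ 𝔫) := hP_mem 0 y
        rw [(Submodule.mem_bot ℝ).1 h0]; simp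
      | succ k' =>
        by_contra hne0
        have h1 := aux_grading_le L b c hb hsimple k' (hP_mem (k' + 1) y)
        have h2 := (Module.Basis.mem_span_image b).1 h1
        have h3 : i1 ∈ (b.repr (P (k' + 1) y)).support := Finsupp.mem_support_iff.2 hne0
        have h4 := h2 h3
        have hke : k' ≠ e := by
          intro hh
          exact hk (by rw [hh, hjdef, he])
        rcases Nat.lt_or_ge k' e with hlt | hge
        · exact h4.2 (aux_lcs_le (by omega : k' + 1 ≤ e) hi1S.1)
        · exact hi1S.2 (aux_lcs_le (by omega : e + 1 ≤ k') h4.1)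
    have hsum : ∀ y : 𝔫, b.repr y i1 = ∑ k ∈ Finset.Icc 1 d, b.repr (P k y) i1 := by
      intro y
      conv_lhs => rw [hP_sum y]
      rw [map_sum, Finsupp.coe_finset_sum, Finset.sum_apply]
    have hj_mem : j ∈ Finset.Icc 1 d := by
      by_contra hjm
      apply ha
      rw [hsum x, Finset.sum_eq_zero]
      intro k hkm
      exact hvanish k (fun h => hjm (h ▸ hkm)) x
    have hcollapse : ∀ y : 𝔫, b.repr (P j y) i1 = b.repr y i1 := by
      intro y
      rw [hsum y]
      exact (Finset.sum_eq_single_of_mem j hj_mem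
        (fun k _ hkj => hvanish k hkj y)).symm
    letI : NormedAddCommGroup 𝔫 := AddGroupNorm.toNormedAddCommGroup
      { toFun := Nm
        map_zero' := (hNm_eq_zero 0).2 rfl
        add_le' := hNm_add
        neg' := fun z => by
          have h := hNm_smul (-1) z
          simpa using h
        eq_zero_of_map_eq_zero' := fun z hz => (hNm_eq_zero z).1 hz }
    letI : NormedSpace ℝ 𝔫 :=
      { norm_smul_le := fun a y => le_of_eq (by
          show Nm (a • y) = ‖a‖ * Nm y
          rw [hNm_smul, Real.norm_eq_abs]) }
    obtain ⟨K, hK0, hK⟩ : ∃ K : ℝ, 0 ≤ K ∧ ∀ y : 𝔫, |b.repr y i1| ≤ K * Nm y := by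
      let g := LinearMap.toContinuousLinearMap (b.coord i1)
      refine ⟨‖g‖, norm_nonneg g, fun y => ?_⟩
      have h := g.le_opNorm y
      exact (by simpa [g, Real.norm_eq_abs, Module.Basis.coord_apply] using h :
        |b.repr y i1| ≤ ‖g‖ * ‖y‖)
    have hjne : (j : ℕ) ≠ 0 := by have := hdeg₁ i1; omega
    have hguip : ∀ y : 𝔫, 0 ≤ guiLength Nm P d hd y := by
      intro y
      obtain ⟨k0, hk0⟩ := hd
      exact le_trans (Real.rpow_nonneg (hNm_nonneg _) _)
        (Finset.le_sup' (fun k => Nm (P k y) ^ ((1 : ℝ) / k)) hk0)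
    have hNmle : ∀ y : 𝔫, Nm (P j y) ≤ (guiLength Nm P d hd y) ^ j := by
      intro y
      have h1 : Nm (P j y) ^ ((1 : ℝ) / j) ≤ guiLength Nm P d hd y :=
        Finset.le_sup' (fun k => Nm (P k y) ^ ((1 : ℝ) / k)) hj_mem
      have h2 : Nm (P j y) = (Nm (P j y) ^ ((1 : ℝ) / j)) ^ j := by
        rw [← Real.rpow_natCast (Nm (P j y) ^ ((1 : ℝ) / (j : ℝ))) j,
          ← Real.rpow_mul (hNm_nonneg _), one_div_mul_cancel (ne_of_gt hj0),
          Real.rpow_one]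
      rw [h2]
      exact pow_le_pow_left₀ (Real.rpow_nonneg (hNm_nonneg _) _) h1 j
    set B := |C| + |D| with hBdef
    have hφB : ∀ m : ℕ, guiLength Nm P d hd ((⇑L)^[m] x) ≤ B * η ^ m := by
      intro m
      refine le_trans (hφ m) ?_
      have hηm : 1 ≤ η ^ m := one_le_pow₀ (le_of_lt hηgt1)
      have h1 : C * η ^ m ≤ |C| * η ^ m :=
        mul_le_mul_of_nonneg_right (le_abs_self C) (pow_nonneg (le_of_lt hηpos) m)
      have h2 : D ≤ |D| * η ^ m :=
        le_trans (le_abs_self D) (le_mul_of_one_le_right (abs_nonneg D) hηm)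
      have h3 : B * η ^ m = |C| * η ^ m + |D| * η ^ m := by rw [hBdef]; ring
      linarith
    have hchain : ∀ m : ℕ, |b.repr x i1| * |c i1| ^ m ≤ (K * B ^ j) * (η ^ j) ^ m := by
      intro m
      have e2 : |b.repr ((⇑L)^[m] x) i1| ≤ K * Nm (P j ((⇑L)^[m] x)) := by
        rw [← hcollapse ((⇑L)^[m] x)]
        exact hK _
      have e3 : Nm (P j ((⇑L)^[m] x)) ≤ (B * η ^ m) ^ j :=
        le_trans (hNmle _) (pow_le_pow_left₀ (hguip _) (hφB m) j)
      calc |b.repr x i1| * |c i1| ^ m = |b.repr ((⇑L)^[m] x) i1| := by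
            rw [hrepr m, abs_mul, abs_pow]; ring
        _ ≤ K * Nm (P j ((⇑L)^[m] x)) := e2
        _ ≤ K * (B * η ^ m) ^ j := mul_le_mul_of_nonneg_left e3 hK0
        _ = (K * B ^ j) * (η ^ j) ^ m := by
            rw [mul_pow, ← pow_mul, mul_comm m j, pow_mul]; ring
    have hapos : 0 < |b.repr x i1| := abs_pos.2 ha
    have hηjpos : 0 < η ^ j := pow_pos hηpos j
    have hr : 1 < |c i1| / η ^ j := (one_lt_div hηjpos).2 hμ
    obtain ⟨m, hm⟩ := pow_unbounded_of_one_lt ((K * B ^ j) / |b.repr x i1|) hr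
    rw [div_pow, div_lt_div_iff₀ hapos (pow_pos hηjpos m)] at hm
    have hcm := hchain m
    have hcomm : |c i1| ^ m * |b.repr x i1| = |b.repr x i1| * |c i1| ^ m := mul_comm _ _
    linarith
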